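/- Fix integers k ≥ 2, n ≥ 2, and 0 ≤ ε ≤ k−1, and fix 0 ≤ j ≤ k−1. For each word w of length k−1 in the alphabet {E, N}, let V_w be the set of (γ₁, γ₂) ∈ 𝒫^{k,ε}_{n,1} such that γ₁ terminates with the steps w and γ₂ terminates with E N^{k−2}. Then the sum of |V_w| over all words w of length k−1 containing exactly j instances of E equals (C(k−1, j) − C(ε, j)) · |𝒫^{k,ε}_{n−1,j}|, where C(ε, j) = 0 for j > ε. -/

import Mathlib

/-- A step of a lattice path: `E = (1,0)` or `N = (0,1)`. -/
inductive Step : Type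
  | E | N
deriving DecidableEq, Repr

instance instFintypeStep : Fintype Step :=
  ⟨{Step.E, Step.N}, fun x => by cases x <;> simp⟩

/-- The terminal point of a lattice path starting at `(0,0)`. -/
def endpoint (γ : List Step) : ℤ × ℤ :=
  ((γ.count Step.E : ℤ), (γ.count Step.N : ℤ))

/-- The set of lattice points visited by a lattice path starting at `(0,0)`. -/
def vertices (γ : List Step) : Set (ℤ × ℤ) :=
  {p | ∃ i ≤ γ.length, endpoint (γ.take i) = p}

/-- The bottom-path condition: `γ = E N^{b₁} E N^{b₂} ⋯ E N^{b_m}` where every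
`bᵢ ≡ k - 2 (mod k - 1)`. -/
def kGoodBottom (k : ℕ) (γ : List Step) : Prop :=
  ∃ bs : List ℕ, (∀ b ∈ bs, b % (k - 1) = (k - 2) % (k - 1)) ∧
    γ = (bs.map fun b => Step.E :: List.replicate b Step.N).flatten

/-- `γ₁` stays weakly above `γ₂`: no visited point of `γ₂` lies strictly above a
visited point of `γ₁` with the same `x`-coordinate. -/
def weaklyAbove (γ₁ γ₂ : List Step) : Prop :=
  ∀ p ∈ vertices γ₁, ∀ q ∈ vertices γ₂, p.1 = q.1 → q.2 ≤ p.2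

/-- The set `𝒫^{k,ε}_{n,δ}` of `k`-path pairs of length `((k-1)n - ε, (k-1)n)`
and distance `δ`. -/
def PathPairs (k n ε δ : ℕ) : Set (List Step × List Step) :=
  {p | p.1.length = (k - 1) * n - ε ∧ p.1.head? = some Step.N ∧
       p.2.length = (k - 1) * n ∧ p.2.head? = some Step.E ∧
       (∀ q ∈ vertices p.1 ∩ vertices p.2, q = ((0 : ℤ), (0 : ℤ))) ∧
       (endpoint p.2).1 - (endpoint p.1).1 = (δ : ℤ) ∧
       kGoodBottom k p.2}

/-- The set `𝒫̃^{k,ε}_{n,δ,m}` of weak `k`-path pairs of distance `δ` with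
exactly `m` returns (intersections away from the origin). -/
def WeakPathPairs (k n ε δ m : ℕ) : Set (List Step × List Step) :=
  {p | p.1.length = (k - 1) * n - ε ∧ p.1.head? = some Step.N ∧
       p.2.length = (k - 1) * n ∧ p.2.head? = some Step.E ∧
       weaklyAbove p.1 p.2 ∧
       (endpoint p.2).1 - (endpoint p.1).1 = (δ : ℤ) ∧
       kGoodBottom k p.2 ∧
       ((vertices p.1 ∩ vertices p.2) \ {((0 : ℤ), (0 : ℤ))}).ncard = m}

/-- The generating function `C_k(t) = ∑_{n≥0} (1/(kn+1)) C(kn+1, n) tⁿ` of the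
`k`-Catalan (Fuss–Catalan) numbers, as a formal power series over `ℚ`. -/
def fussCatalanGF (k : ℕ) : PowerSeries ℚ :=
  PowerSeries.mk fun n => (((k * n + 1 : ℕ) : ℚ))⁻¹ * ((k * n + 1).choose n : ℚ)


lemma countEN (l : List Step) : l.count Step.E + l.count Step.N = l.length := by
  induction l with
  | nil => rfl
  | cons a l ih =>
    cases a <;> simp [List.count_cons, ih] <;> omega

lemma endpoint_inj {l l' : List Step}
    (h : endpoint l = endpoint l') :
    l.count Step.E = l'.count Step.E ∧ l.count Step.N = l'.count Step.N := by
  simp only [endpoint, Prod.mk.injEq, Nat.cast_inj] at h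
  exact h

lemma mem_vertices {γ : List Step} {q : ℤ × ℤ} :
    q ∈ vertices γ ↔ ∃ i, i ≤ γ.length ∧ endpoint (γ.take i) = q := Iff.rfl

lemma count_take_succ (l : List Step) (i : ℕ) (hi : i < l.length) (c : Step) :
    (l.take (i+1)).count c = (l.take i).count c + if l.get ⟨i, hi⟩ = c then 1 else 0 := by
  rw [List.take_succ, List.getElem?_eq_getElem hi]
  by_cases h : l[i] = c <;> simp only [List.get_eq_getElem, Option.toList_some, List.count_append, List.count_cons, List.count_nil, beq_iff_eq, h, if_true, if_false, ↓reduceIte] <;> omega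

lemma no_common {γ₁ γ₂ : List Step}
    (hdisj : ∀ q ∈ vertices γ₁ ∩ vertices γ₂, q = ((0:ℤ),(0:ℤ)))
    {s t : ℕ} (hs1 : 1 ≤ s) (hs2 : s ≤ γ₁.length) (ht2 : t ≤ γ₂.length)
    (hE : (γ₁.take s).count Step.E = (γ₂.take t).count Step.E)
    (hN : (γ₁.take s).count Step.N = (γ₂.take t).count Step.N) : False := by
  have hq : endpoint (γ₁.take s) ∈ vertices γ₁ ∩ vertices γ₂ :=
    ⟨⟨s, hs2, rfl⟩, ⟨t, ht2, by simp [endpoint, hE, hN]⟩⟩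
  have h0 := hdisj _ hq
  have h1 := endpoint_inj (l' := ([] : List Step)) (by simpa [endpoint] using h0)
  have h2 := countEN (γ₁.take s)
  rw [List.length_take] at h2
  simp at h1
  omega

lemma lemA {γ₁ γ₂ : List Step} (h1 : γ₁.head? = some Step.N)
    (h2 : γ₂.head? = some Step.E)
    (hdisj : ∀ q ∈ vertices γ₁ ∩ vertices γ₂, q = ((0:ℤ),(0:ℤ))) :
    ∀ s t, 1 ≤ s → s ≤ γ₁.length → 1 ≤ t → t ≤ γ₂.length →
      (γ₁.take s).count Step.E < (γ₂.take t).count Step.E ∨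
      (γ₂.take t).count Step.N < (γ₁.take s).count Step.N := by
  obtain ⟨l₁, rfl⟩ : ∃ l, γ₁ = Step.N :: l := by
    cases γ₁ with
    | nil => simp at h1
    | cons a l =>
      simp only [List.head?_cons, Option.some.injEq] at h1
      exact ⟨l, by rw [h1]⟩
  obtain ⟨l₂, rfl⟩ : ∃ l, γ₂ = Step.E :: l := by
    cases γ₂ with
    | nil => simp at h2
    | cons a l =>
      simp only [List.head?_cons, Option.some.injEq] at h2
      exact ⟨l, by rw [h2]⟩
  set γ₁ := Step.N :: l₁ with hγ₁
  set γ₂ := Step.E :: l₂ with hγ₂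
  have hN1 : ∀ s, 1 ≤ s → 1 ≤ (γ₁.take s).count Step.N := by
    intro s hs
    obtain ⟨s', rfl⟩ : ∃ s', s = s' + 1 := ⟨s - 1, by omega⟩
    simp [hγ₁, List.count_cons]
  have key : ∀ m s t, s + t = m → 1 ≤ s → s ≤ γ₁.length → 1 ≤ t → t ≤ γ₂.length →
      (γ₁.take s).count Step.E < (γ₂.take t).count Step.E ∨
      (γ₂.take t).count Step.N < (γ₁.take s).count Step.N := by
    intro m
    induction m using Nat.strong_induction_on with
    | _ m IH =>
      intro s t hm hs1 hs2 ht1 ht2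
      by_contra hcon
      push_neg at hcon
      obtain ⟨hA, hB⟩ := hcon
      have hne : ¬((γ₁.take s).count Step.E = (γ₂.take t).count Step.E ∧
          (γ₁.take s).count Step.N = (γ₂.take t).count Step.N) := by
        rintro ⟨e, n⟩; exact no_common hdisj hs1 hs2 ht2 e n
      have ht' : t - 1 < γ₂.length := by omega
      have htt : t - 1 + 1 = t := by omega
      have hcE2 := count_take_succ γ₂ (t-1) ht' Step.E
      have hcN2 := count_take_succ γ₂ (t-1) ht' Step.N
      rw [htt] at hcE2 hcN2
      have hs' : s - 1 < γ₁.length := by omega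
      have hss : s - 1 + 1 = s := by omega
      have hcE1 := count_take_succ γ₁ (s-1) hs' Step.E
      have hcN1 := count_take_succ γ₁ (s-1) hs' Step.N
      rw [hss] at hcE1 hcN1
      rcases he2 : γ₂.get ⟨t-1, ht'⟩ with _ | _
      · -- last step of γ₂ prefix is E
        rw [he2] at hcE2 hcN2
        simp at hcE2 hcN2
        rcases Nat.eq_or_lt_of_le ht1 with h1t | h1t
        · -- t = 1
          have hn1 := hN1 s hs1
          have ht0 : t - 1 = 0 := by omega
          rw [ht0] at hcN2
          simp at hcN2
          omega
        · have := IH (s + (t-1)) (by omega) s (t-1) rfl hs1 hs2 (by omega) (by omega)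
          omega
      · -- last step of γ₂ prefix is N
        rw [he2] at hcE2 hcN2
        simp at hcE2 hcN2
        have ht1' : 2 ≤ t := by
          rcases Nat.eq_or_lt_of_le ht1 with h1t | h1t
          · exfalso
            have hE0 : γ₂.get ⟨t-1, ht'⟩ = Step.E := by
              have : t - 1 = 0 := by omega
              simp [this, hγ₂]
            rw [hE0] at he2; exact Step.noConfusion he2
          · omega
        rcases Nat.lt_or_ge ((γ₂.take (t-1)).count Step.N) ((γ₁.take s).count Step.N) with hx | hx
        · have hNeq : (γ₁.take s).count Step.N = (γ₂.take t).count Step.N := by omega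
          have hEne : (γ₂.take t).count Step.E < (γ₁.take s).count Step.E := by
            rcases Nat.lt_or_ge ((γ₂.take t).count Step.E) ((γ₁.take s).count Step.E) with h | h
            · exact h
            · exact absurd ⟨by omega, hNeq⟩ hne
          rcases he1 : γ₁.get ⟨s-1, hs'⟩ with _ | _
          · rw [he1] at hcE1 hcN1
            simp at hcE1 hcN1
            have hs1' : 2 ≤ s := by
              rcases Nat.eq_or_lt_of_le hs1 with h1s | h1s
              · exfalso
                have hN0 : γ₁.get ⟨s-1, hs'⟩ = Step.N := by
                  have : s - 1 = 0 := by omega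
                  simp [this, hγ₁]
                rw [hN0] at he1; exact Step.noConfusion he1
              · omega
            have := IH ((s-1) + t) (by omega) (s-1) t rfl (by omega) (by omega) ht1 ht2
            omega
          · rw [he1] at hcE1 hcN1
            simp at hcE1 hcN1
            have hs1' : 2 ≤ s := by
              rcases Nat.eq_or_lt_of_le hs1 with h1s | h1s
              · exfalso
                have : (γ₁.take s).count Step.E = 0 := by
                  rw [← h1s]
                  simp [hγ₁, List.count_cons]
                omega
              · omega
            have := IH ((s-1) + t) (by omega) (s-1) t rfl (by omega) (by omega) ht1 ht2
            omega
        · have := IH (s + (t-1)) (by omega) s (t-1) rfl hs1 hs2 (by omega) (by omega)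
          omega
  intro s t hs1 hs2 ht1 ht2
  exact key (s+t) s t rfl hs1 hs2 ht1 ht2

lemma ktail_aux (k : ℕ) (bs : List ℕ) (hbs : ∀ b ∈ bs, k - 2 ≤ b) (i : ℕ) :
    (k-2) * (((bs.map fun b => Step.E :: List.replicate b Step.N).flatten.drop i).count Step.E)
      ≤ (((bs.map fun b => Step.E :: List.replicate b Step.N).flatten.drop i).count Step.N) := by
  induction bs generalizing i with
  | nil => simp
  | cons b bs ih =>
    have hb : k - 2 ≤ b := hbs b List.mem_cons_self
    have hbs' : ∀ b ∈ bs, k - 2 ≤ b := fun b hb => hbs b (List.mem_cons_of_mem _ hb)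
    simp only [List.map_cons, List.flatten_cons, List.drop_append,
      List.count_append]
    have hblock : (k-2) * (((Step.E :: List.replicate b Step.N).drop i).count Step.E)
        ≤ ((Step.E :: List.replicate b Step.N).drop i).count Step.N := by
      cases i with
      | zero => simp [List.count_replicate]; omega
      | succ i' =>
        have : (Step.E :: List.replicate b Step.N).drop (i'+1) = (List.replicate b Step.N).drop i' := rfl
        rw [this, List.drop_replicate]
        simp [List.count_replicate]
    calc (k-2) * (_ + _) = (k-2) * _ + (k-2) * _ := by ring
      _ ≤ _ := add_le_add hblock (ih hbs' _)

lemma kmod_ge {k b : ℕ} (hk : 2 ≤ k) (hb : b % (k-1) = (k-2) % (k-1)) : k - 2 ≤ b := by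
  have h1 : (k-2) % (k-1) = k - 2 := Nat.mod_eq_of_lt (by omega)
  have := Nat.mod_le b (k-1)
  omega

lemma ktail {k : ℕ} (hk : 2 ≤ k) {γ : List Step} (hg : kGoodBottom k γ) (i : ℕ) :
    (k-2) * ((γ.drop i).count Step.E) ≤ (γ.drop i).count Step.N := by
  obtain ⟨bs, hbs, rfl⟩ := hg
  exact ktail_aux k bs (fun b hb => kmod_ge hk (hbs b hb)) i

lemma count_take_drop (l : List Step) (i : ℕ) (c : Step) :
    (l.take i).count c + (l.drop i).count c = l.count c := by
  rw [← List.count_append, List.take_append_drop]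

lemma suffix_eq_of_length {u v l : List Step} (hu : u <:+ l) (hv : v <:+ l)
    (h : u.length = v.length) : u = v := by
  obtain ⟨a, rfl⟩ := hu
  obtain ⟨b, hb⟩ := hv
  have hlen : a.length = b.length := by
    have := congrArg List.length hb
    simp at this ⊢
    omega
  exact (List.append_inj hb.symm hlen).2

lemma kGood_snoc {k : ℕ} (hk : 2 ≤ k) {γ : List Step} (hg : kGoodBottom k γ) :
    kGoodBottom k (γ ++ (Step.E :: List.replicate (k-2) Step.N)) := by
  obtain ⟨bs, hbs, rfl⟩ := hg
  refine ⟨bs ++ [k-2], ?_, by simp⟩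
  intro b hb
  rcases List.mem_append.1 hb with h | h
  · exact hbs b h
  · simp at h; subst h; rfl

lemma kGood_unsnoc {k : ℕ} (hk : 2 ≤ k) {γ : List Step} (hg : kGoodBottom k γ)
    (hne : γ ≠ []) (hsuf : (Step.E :: List.replicate (k-2) Step.N) <:+ γ) :
    ∃ σ, γ = σ ++ (Step.E :: List.replicate (k-2) Step.N) ∧ kGoodBottom k σ := by
  obtain ⟨bs, hbs, rfl⟩ := hg
  rcases List.eq_nil_or_concat bs with rfl | ⟨bs', b, rfl⟩
  case _ => simp at hne
  rw [List.concat_eq_append] at hbs hne hsuf ⊢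
  · have hb : b % (k-1) = (k-2) % (k-1) := hbs b (by simp)
    have hbge : k - 2 ≤ b := kmod_ge hk hb
    by_cases hbeq : b = k - 2
    · subst hbeq
      refine ⟨(bs'.map fun b => Step.E :: List.replicate b Step.N).flatten, by simp, ?_⟩
      exact ⟨bs', fun b hb => hbs b (by simp [hb]), rfl⟩
    · exfalso
      have hbig : k - 1 ≤ b := by
        have h1 : (k-2) % (k-1) = k - 2 := Nat.mod_eq_of_lt (by omega)
        rcases Nat.lt_or_ge b (k-1) with h | h
        · rw [Nat.mod_eq_of_lt h] at hb; omega
        · omega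
      have hsufN : (List.replicate (k-1) Step.N) <:+
          ((bs' ++ [b]).map fun b => Step.E :: List.replicate b Step.N).flatten := by
        have h1 : (List.replicate (k-1) Step.N) <:+ (List.replicate b Step.N) :=
          ⟨List.replicate (b - (k-1)) Step.N, by
            rw [← List.replicate_add]; congr 1; omega⟩
        have h2 : (List.replicate b Step.N) <:+
            ((bs' ++ [b]).map fun b => Step.E :: List.replicate b Step.N).flatten := by
          simp
          exact ⟨(bs'.map fun b => Step.E :: List.replicate b Step.N).flatten ++ [Step.E], by simp⟩
        exact h1.trans h2
      have := suffix_eq_of_length hsuf hsufN (by simp; omega)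
      have : Step.E = Step.N := by
        have h0 := congrArg List.head? this
        obtain ⟨m, hm⟩ : ∃ m, k - 1 = m + 1 := ⟨k-2, by omega⟩
        rw [hm] at h0
        simpa [List.replicate_succ] using h0
      exact Step.noConfusion this

lemma endpoint_eq_of_counts {l l' : List Step}
    (hE : l.count Step.E = l'.count Step.E) (hN : l.count Step.N = l'.count Step.N) :
    endpoint l = endpoint l' := by simp [endpoint, hE, hN]

lemma endpoint_mem_vertices_take {l : List Step} {i : ℕ} (h : i ≤ l.length) :
    endpoint (l.take i) ∈ vertices l := ⟨i, h, rfl⟩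

lemma bad_empty (k n ε : ℕ) (hk : 2 ≤ k) (hn : 2 ≤ n) (hε : ε ≤ k-1)
    (w : List Step) (hw : w.length = k-1)
    (hbad : ∀ x ∈ w.drop ε, x = Step.N) :
    {p ∈ PathPairs k n ε 1 | w <:+ p.1 ∧ (Step.E :: List.replicate (k-2) Step.N) <:+ p.2} = ∅ := by
  have hkn : k - 1 ≤ (k-1) * n := Nat.le_mul_of_pos_right _ (by omega)
  have hkn2 : (k-1) * 2 ≤ (k-1) * n := Nat.mul_le_mul_left _ hn
  ext p
  simp only [Set.mem_setOf_eq, Set.mem_empty_iff_false, iff_false, not_and]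
  rintro ⟨hl1, hh1, hl2, hh2, hdisj, hδ, hgood⟩ ⟨u, hu⟩ ⟨v, hv⟩
  simp only [endpoint] at hδ
  -- basic count facts
  have hcc1 := countEN p.1
  have hcc2 := countEN p.2
  have hX : p.2.count Step.E = p.1.count Step.E + 1 := by omega
  -- prefix of p.1
  have hul : u.length = (k-1)*n - ε - (k-1) := by
    have := congrArg List.length hu
    simp [hw] at this
    omega
  set i : ℕ := (k-1)*n - (k-1) with hi
  have hile : i ≤ p.1.length := by omega
  have htake1 : p.1.take i = u ++ w.take ε := by
    rw [← hu, List.take_append]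
    congr 1
    · exact List.take_of_length_le (by omega)
    · congr 1; omega
  have hwE : (w.take ε).count Step.E = w.count Step.E := by
    have hdropE : (w.drop ε).count Step.E = 0 := by
      rw [List.count_eq_zero]
      intro hmem
      exact Step.noConfusion (hbad _ hmem)
    have := count_take_drop w ε Step.E
    omega
  have hc1E : (p.1.take i).count Step.E = u.count Step.E + w.count Step.E := by
    rw [htake1, List.count_append, hwE]
  have hc1len : (p.1.take i).length = i := by
    rw [List.length_take]; omega
  -- prefix of p.2
  have hvl : v.length = (k-1)*n - (k-1) := by
    have := congrArg List.length hv
    simp at this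
    omega
  have htake2 : p.2.take i = v := by
    rw [← hv, hi, ← hvl, List.take_left]
  have hc2E : (p.2.take i).count Step.E = v.count Step.E := by rw [htake2]
  have hvE : v.count Step.E + 1 = p.2.count Step.E := by
    have := congrArg (List.count Step.E) hv
    simp [List.count_append, List.count_replicate] at this
    omega
  -- u count from p.1
  have huE : u.count Step.E + w.count Step.E = p.1.count Step.E := by
    have := congrArg (List.count Step.E) hu
    simp [List.count_append] at this
    omega
  -- the two prefixes have the same endpoint
  have hEeq : (p.1.take i).count Step.E = (p.2.take i).count Step.E := by omega
  have hNeq : (p.1.take i).count Step.N = (p.2.take i).count Step.N := by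
    have h1 := countEN (p.1.take i)
    have h2 := countEN (p.2.take i)
    rw [hc1len] at h1
    rw [List.length_take] at h2
    omega
  have hmem : endpoint (p.1.take i) ∈ vertices p.1 ∩ vertices p.2 :=
    ⟨endpoint_mem_vertices_take hile,
     endpoint_eq_of_counts hEeq hNeq ▸ endpoint_mem_vertices_take (by omega)⟩
  have h0 := hdisj _ hmem
  have h1 := endpoint_inj (l' := ([] : List Step)) (by simpa [endpoint] using h0)
  simp at h1
  have := countEN (p.1.take i)
  rw [hc1len] at this
  omega

lemma mem_vertices_append {a b : List Step} {q : ℤ × ℤ} :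
    q ∈ vertices (a ++ b) ↔ ((∃ i ≤ a.length, endpoint (a.take i) = q) ∨
      (∃ m ≤ b.length, endpoint (a ++ b.take m) = q)) := by
  constructor
  · rintro ⟨i, hi, rfl⟩
    rw [List.length_append] at hi
    rcases le_or_gt i a.length with h | h
    · exact Or.inl ⟨i, h, by rw [List.take_append_of_le_length h]⟩
    · refine Or.inr ⟨i - a.length, by omega, ?_⟩
      rw [List.take_append,
        List.take_of_length_le (show a.length ≤ i by omega)]
  · rintro (⟨i, hi, rfl⟩ | ⟨m, hm, rfl⟩)
    · exact ⟨i, by rw [List.length_append]; omega, by rw [List.take_append_of_le_length hi]⟩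
    · refine ⟨a.length + m, by rw [List.length_append]; omega, ?_⟩
      rw [List.take_append,
        List.take_of_length_le (show a.length ≤ a.length + m by omega)]
      have hmm : a.length + m - a.length = m := by omega
      rw [hmm]

lemma head?_append_left {a b : List Step} (h : a ≠ []) : (a ++ b).head? = a.head? := by
  cases a with
  | nil => simp at h
  | cons x l => rfl

lemma ne_nil_of_head? {a : List Step} {c : Step} (h : a.head? = some c) : a ≠ [] := by
  cases a with
  | nil => simp at h
  | cons x l => simp

lemma good_disjoint (k ε j : ℕ) (hk : 2 ≤ k)
    (w σ₁ σ₂ : List Step) (hw : w.length = k-1) (hwj : w.count Step.E = j)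
    (hgood : ∃ x ∈ w.drop ε, x = Step.E)
    (hh1 : σ₁.head? = some Step.N) (hh2 : σ₂.head? = some Step.E)
    (hdisj : ∀ q ∈ vertices σ₁ ∩ vertices σ₂, q = ((0:ℤ),(0:ℤ)))
    (hlen : σ₁.length + ε = σ₂.length)
    (hε : ε ≤ k - 1)
    (hδ : σ₂.count Step.E = σ₁.count Step.E + j)
    (hgd : kGoodBottom k σ₂) :
    ∀ q ∈ vertices (σ₁ ++ w) ∩
        vertices (σ₂ ++ (Step.E :: List.replicate (k-2) Step.N)), q = ((0:ℤ),(0:ℤ)) := by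
  have hjk : j ≤ k - 1 := by rw [← hwj, ← hw]; exact List.count_le_length
  rintro q ⟨hq1, hq2⟩
  obtain ⟨i1, hi1, hq1e⟩ := hq1
  have hxbound : ((σ₁ ++ w).take i1).count Step.E ≤ σ₁.count Step.E + j := by
    have := (List.take_sublist i1 (σ₁ ++ w)).count_le Step.E
    rwa [List.count_append, hwj] at this
  suffices main : ∀ i2 ≤ σ₂.length, endpoint (σ₂.take i2) = q → q = ((0:ℤ),(0:ℤ)) by
    rw [mem_vertices_append] at hq2
    rcases hq2 with ⟨i2, hi2, hq2e⟩ | ⟨m2, hm2, hq2e⟩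
    · exact main i2 hi2 hq2e
    · rcases Nat.eq_zero_or_pos m2 with rfl | hm2pos
      · exact main σ₂.length le_rfl (by simpa [List.take_length] using hq2e)
      · exfalso
        obtain ⟨m2', rfl⟩ : ∃ m2', m2 = m2' + 1 := ⟨m2 - 1, by omega⟩
        have hEcnt := endpoint_inj (hq1e.trans hq2e.symm)
        rw [List.count_append, List.take_succ_cons, List.count_cons_self] at hEcnt
        omega
  intro i2 hi2 hq2e
  rw [List.length_append] at hi1
  rcases le_or_gt i1 σ₁.length with hc | hc
  · refine hdisj q ⟨⟨i1, hc, ?_⟩, ⟨i2, hi2, hq2e⟩⟩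
    rw [← List.take_append_of_le_length (l₂ := w) hc]
    exact hq1e
  · obtain ⟨m1, hm1, hq1e'⟩ : ∃ m1, m1 ≤ w.length ∧ endpoint (σ₁ ++ w.take m1) = q := by
      refine ⟨i1 - σ₁.length, by omega, ?_⟩
      rw [← hq1e, List.take_append,
        List.take_of_length_le (show σ₁.length ≤ i1 by omega)]
    rcases Nat.eq_zero_or_pos i2 with rfl | hi2pos
    · simp only [List.take_zero] at hq2e
      rw [← hq2e]
      simp [endpoint]
    exfalso
    have hEN := endpoint_inj (hq1e'.trans hq2e.symm)
    rw [List.count_append, List.count_append] at hEN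
    set s := (w.take m1).count Step.E with hs
    set r := (w.take m1).count Step.N with hr
    have hsj : s ≤ j := by
      rw [hs, ← hwj]; exact (List.take_sublist _ _).count_le _
    have hσ1ne : σ₁ ≠ [] := ne_nil_of_head? hh1
    have hσ1len : 1 ≤ σ₁.length := List.length_pos_iff.2 hσ1ne
    rcases Nat.eq_zero_or_pos s with hs0 | hspos
    · -- s = 0 : use the non-crossing lemma at the endpoint of σ₁
      have := lemA hh1 hh2 hdisj σ₁.length i2 hσ1len le_rfl hi2pos hi2
      rw [List.take_length] at this
      omega
    · -- s ≥ 1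
      have htd2E := count_take_drop σ₂ i2 Step.E
      have htd2N := count_take_drop σ₂ i2 Step.N
      have hktail := ktail hk hgd i2
      have hcc1 := countEN σ₁
      have hcc2 := countEN σ₂
      have hccw := countEN (w.take m1)
      have hwtl : (w.take m1).length = m1 := by rw [List.length_take]; omega
      rcases Nat.lt_or_ge s j with hslt | hsge
      · -- s < j
        have hcd : 1 ≤ (σ₂.drop i2).count Step.E := by omega
        have := Nat.le_mul_of_pos_right (k-2) hcd
        omega
      · -- s = j : the prefix must extend past position ε
        have hsj' : s = j := by omega
        have hdropw : (w.drop m1).count Step.E = 0 := by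
          have := count_take_drop w m1 Step.E
          omega
        have hgoodcnt : 1 ≤ (w.drop ε).count Step.E := by
          obtain ⟨x, hx, rfl⟩ := hgood
          exact List.count_pos_iff.2 hx
        have hm1ε : ε + 1 ≤ m1 := by
          by_contra hcon
          push_neg at hcon
          have hsub : List.Sublist (w.drop ε) (w.drop m1) := by
            have : w.drop ε = (w.drop m1).drop (ε - m1) := by
              rw [List.drop_drop]; congr 1; omega
            rw [this]
            exact List.drop_sublist _ _
          have := hsub.count_le Step.E
          omega
        omega

lemma good_eq (k n ε j : ℕ) (hk : 2 ≤ k) (hn : 2 ≤ n) (hε : ε ≤ k-1)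
    (w : List Step) (hw : w.length = k-1) (hwj : w.count Step.E = j)
    (hgood : ∃ x ∈ w.drop ε, x = Step.E) :
    {p ∈ PathPairs k n ε 1 | w <:+ p.1 ∧ (Step.E :: List.replicate (k-2) Step.N) <:+ p.2}
      = (fun σ : List Step × List Step =>
          (σ.1 ++ w, σ.2 ++ (Step.E :: List.replicate (k-2) Step.N))) ''
            (PathPairs k (n-1) ε j) := by
  obtain ⟨m, rfl⟩ : ∃ m, n = m + 1 := ⟨n - 1, by omega⟩
  have hm1 : 1 ≤ m := by omega
  have hmul : (k-1) * (m+1) = (k-1) * m + (k-1) := by ring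
  have hP : k - 1 ≤ (k-1) * m := Nat.le_mul_of_pos_right _ (by omega)
  have hεlt : ε + 1 ≤ k - 1 := by
    obtain ⟨x, hx, _⟩ := hgood
    have hlt : ε < w.length := by
      by_contra hcon
      push_neg at hcon
      rw [List.drop_eq_nil_of_le hcon] at hx
      simp at hx
    omega
  have hsimp : m + 1 - 1 = m := by omega
  rw [hsimp]
  ext p
  simp only [Set.mem_setOf_eq, Set.mem_image]
  constructor
  · rintro ⟨⟨hl1, hh1, hl2, hh2, hdisj, hδ, hgd⟩, ⟨u, hu⟩, ⟨v, hv⟩⟩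
    simp only [endpoint] at hδ
    have hul : u.length = (k-1) * m - ε := by
      have := congrArg List.length hu
      simp [hw] at this
      omega
    have hvl : v.length = (k-1) * m := by
      have := congrArg List.length hv
      simp at this
      omega
    have hune : u ≠ [] := by
      intro h
      rw [h] at hul
      simp at hul
      omega
    have hvne : v ≠ [] := by
      intro h
      rw [h] at hvl
      simp at hvl
      omega
    -- kGood for v
    obtain ⟨σ', hσ'eq, hσ'good⟩ := kGood_unsnoc hk hgd
      (by intro h; rw [h] at hl2; simp at hl2; omega) (⟨v, hv⟩)
    have hvσ' : v = σ' := by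
      have : v ++ (Step.E :: List.replicate (k-2) Step.N)
          = σ' ++ (Step.E :: List.replicate (k-2) Step.N) := by rw [hv, hσ'eq]
      exact (List.append_inj' this rfl).1
    refine ⟨(u, v), ⟨hul, ?_, hvl, ?_, ?_, ?_, hvσ' ▸ hσ'good⟩, ?_⟩
    · rw [← head?_append_left (b := w) hune, hu]; exact hh1
    · rw [← head?_append_left (b := (Step.E :: List.replicate (k-2) Step.N)) hvne, hv]
      exact hh2
    · intro q hq
      refine hdisj q ⟨?_, ?_⟩
      · rw [← hu]
        exact mem_vertices_append.2 (Or.inl hq.1)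
      · rw [← hv]
        exact mem_vertices_append.2 (Or.inl hq.2)
    · have hcu := congrArg (List.count Step.E) hu
      have hcv := congrArg (List.count Step.E) hv
      simp only [List.count_append, hwj] at hcu
      simp only [List.count_append, List.count_cons_self, List.count_replicate] at hcv
      simp only [endpoint]
      have h1 : v.count Step.E + 1 = p.2.count Step.E := by
        rw [← hcv]; simp
      omega
    · simp only
      rw [hu, hv]
  · rintro ⟨⟨σ₁, σ₂⟩, ⟨hl1, hh1, hl2, hh2, hdisj, hδ, hgd⟩, rfl⟩
    dsimp only at hl1 hh1 hl2 hh2 hdisj hδ hgd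
    simp only [endpoint] at hδ
    have hδ' : σ₂.count Step.E = σ₁.count Step.E + j := by omega
    have hσ1ne : σ₁ ≠ [] := ne_nil_of_head? hh1
    have hσ2ne : σ₂ ≠ [] := ne_nil_of_head? hh2
    refine ⟨⟨?_, ?_, ?_, ?_, ?_, ?_, ?_⟩, ⟨σ₁, rfl⟩, ⟨σ₂, rfl⟩⟩
    · simp [hw, hl1]; omega
    · rw [head?_append_left hσ1ne]; exact hh1
    · simp [hl2]; omega
    · rw [head?_append_left hσ2ne]; exact hh2
    · exact good_disjoint k ε j hk w σ₁ σ₂ hw hwj hgood hh1 hh2 hdisj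
        (by omega) hε hδ' hgd
    · have hc2 : (σ₂ ++ (Step.E :: List.replicate (k-2) Step.N)).count Step.E
          = σ₂.count Step.E + 1 := by
        simp [List.count_append, List.count_replicate]
      have hc1 : (σ₁ ++ w).count Step.E = σ₁.count Step.E + j := by
        simp [List.count_append, hwj]
      simp only [endpoint, hc2, hc1]
      push_cast
      omega
    · exact kGood_snoc hk hgd

lemma count_ofFn {m : ℕ} (f : Fin m → Step) (c : Step) :
    (List.ofFn f).count c = (Finset.univ.filter fun i => f i = c).card := by
  induction m with
  | zero => simp
  | succ m ih =>
    rw [List.ofFn_succ, List.count_cons, ih (fun i => f i.succ)]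
    rw [Finset.card_filter, Finset.card_filter, Fin.sum_univ_succ]
    have hite : ∀ a b : Step, (if b == a then 1 else 0) = if a = b then (1:ℕ) else 0 := by
      decide
    rw [hite]
    have h2 : (if c = f 0 then (1:ℕ) else 0) = if f 0 = c then 1 else 0 := by
      by_cases h : c = f 0
      · rw [if_pos h, if_pos h.symm]
      · have h' : ¬ f 0 = c := fun hh => h hh.symm
        rw [if_neg h, if_neg h']
    omega

lemma drop_ofFn_allN_iff {m ε : ℕ} (f : Fin m → Step) :
    (∀ x ∈ (List.ofFn f).drop ε, x = Step.N) ↔ (∀ i : Fin m, ε ≤ (i : ℕ) → f i = Step.N) := by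
  constructor
  · intro h i hi
    apply h
    rw [List.mem_drop_iff_getElem]
    refine ⟨(i : ℕ) - ε, by simp; omega, ?_⟩
    have hlt : ε + ((i : ℕ) - ε) < m := by have := i.2; omega
    rw [List.getElem_ofFn]
    congr 1
    apply Fin.ext
    simp
    omega
  · intro h x hx
    rw [List.mem_drop_iff_getElem] at hx
    obtain ⟨t, ht, rfl⟩ := hx
    simp only [List.length_drop, List.length_ofFn] at ht
    rw [List.getElem_ofFn]
    exact h _ (by simp)

lemma count_indicator_card {m : ℕ} (T : Finset (Fin m)) (j : ℕ) :
    (Finset.univ.filter fun f : Fin m → Step =>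
        (List.ofFn f).count Step.E = j ∧ (∀ i : Fin m, i ∉ T → f i = Step.N)).card
      = T.card.choose j := by
  rw [← Finset.card_powersetCard j T]
  apply Finset.card_bij (fun f _ => Finset.univ.filter fun i => f i = Step.E)
  · intro f hf
    simp only [Finset.mem_filter, Finset.mem_univ, true_and] at hf
    obtain ⟨hcount, hsupp⟩ := hf
    rw [Finset.mem_powersetCard]
    constructor
    · intro i hi
      simp only [Finset.mem_filter, Finset.mem_univ, true_and] at hi
      by_contra hiT
      rw [hsupp i hiT] at hi
      exact Step.noConfusion hi
    · rw [← count_ofFn]; exact hcount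
  · intro f hf g hg hfg
    simp only [Finset.mem_filter, Finset.mem_univ, true_and] at hf hg
    funext i
    have := Finset.ext_iff.1 hfg i
    simp only [Finset.mem_filter, Finset.mem_univ, true_and] at this
    cases hfi : f i <;> cases hgi : g i
    · rfl
    · exact absurd (this.1 hfi) (by rw [hgi]; exact fun h => Step.noConfusion h)
    · exact absurd (this.2 hgi) (by rw [hfi]; exact fun h => Step.noConfusion h)
    · rfl
  · intro S hS
    rw [Finset.mem_powersetCard] at hS
    refine ⟨fun i => if i ∈ S then Step.E else Step.N, ?_, ?_⟩
    · simp only [Finset.mem_filter, Finset.mem_univ, true_and]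
      constructor
      · rw [count_ofFn]
        rw [← hS.2]
        congr 1
        ext i
        simp only [Finset.mem_filter, Finset.mem_univ, true_and]
        split <;> simp_all
      · intro i hiT
        have : i ∉ S := fun h => hiT (hS.1 h)
        simp [this]
    · ext i
      simp only [Finset.mem_filter, Finset.mem_univ, true_and]
      split <;> simp_all

lemma card_lt_filter_fin {m ε : ℕ} (hε : ε ≤ m) :
    (Finset.univ.filter fun i : Fin m => (i : ℕ) < ε).card = ε := by
  rw [← Finset.card_range ε]
  apply Finset.card_bij (fun (i : Fin m) _ => (i : ℕ))
  · intro i hi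
    simp only [Finset.mem_filter, Finset.mem_univ, true_and] at hi
    simpa using hi
  · intro a ha b hb hab
    exact Fin.ext hab
  · intro a ha
    rw [Finset.mem_range] at ha
    exact ⟨⟨a, lt_of_lt_of_le ha hε⟩, by simpa using ha, rfl⟩

/-- From the proof of Theorem 2.1: for `δ = 1`, the total size of the sets `V_w`
over words `w` of length `k-1` with exactly `j` instances of `E` equals
`(C(k-1,j) - C(ε,j)) |𝒫^{k,ε}_{n-1,j}|`. -/
theorem kPathPair_Vw_sum (k n ε j : ℕ) (hk : 2 ≤ k) (hn : 2 ≤ n)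
    (hε : ε ≤ k - 1) (hj : j ≤ k - 1) :
    (∑ f ∈ Finset.univ.filter
        (fun f : Fin (k - 1) → Step => (List.ofFn f).count Step.E = j),
      ({p ∈ PathPairs k n ε 1 |
          (List.ofFn f) <:+ p.1 ∧
            (Step.E :: List.replicate (k - 2) Step.N) <:+ p.2}.ncard : ℤ))
      = (((k - 1).choose j : ℤ) - (ε.choose j : ℤ))
          * (PathPairs k (n - 1) ε j).ncard := by
  classical
  set N₀ : ℤ := ((PathPairs k (n - 1) ε j).ncard : ℤ) with hN₀
  set F := Finset.univ.filter
      (fun f : Fin (k - 1) → Step => (List.ofFn f).count Step.E = j) with hF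
  set G : (Fin (k - 1) → Step) → Prop :=
      fun f => ∃ x ∈ (List.ofFn f).drop ε, x = Step.E with hG
  have hterm : ∀ f ∈ F,
      ({p ∈ PathPairs k n ε 1 |
          (List.ofFn f) <:+ p.1 ∧
            (Step.E :: List.replicate (k - 2) Step.N) <:+ p.2}.ncard : ℤ)
        = if G f then N₀ else 0 := by
    intro f hf
    rw [hF, Finset.mem_filter] at hf
    have hwlen : (List.ofFn f).length = k - 1 := by simp
    by_cases hGf : G f
    · rw [if_pos hGf]
      rw [good_eq k n ε j hk hn hε (List.ofFn f) hwlen hf.2 hGf]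
      rw [Set.ncard_image_of_injective _ ?hinj]
      case hinj =>
        intro a b hab
        rw [Prod.ext_iff] at hab ⊢
        exact ⟨(List.append_inj' hab.1 rfl).1, (List.append_inj' hab.2 rfl).1⟩
    · rw [if_neg hGf]
      have hbad : ∀ x ∈ (List.ofFn f).drop ε, x = Step.N := by
        intro x hx
        cases hxval : x with
        | N => rfl
        | E => exact absurd ⟨x, hx, hxval⟩ hGf
      rw [bad_empty k n ε hk hn hε (List.ofFn f) hwlen hbad]
      simp
  rw [Finset.sum_congr rfl hterm, Finset.sum_ite, Finset.sum_const,
    Finset.sum_const_zero, add_zero]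
  -- now count the good words
  have hcard_bad : (F.filter (fun f => ¬ G f)).card = ε.choose j := by
    have hkey := count_indicator_card (Finset.univ.filter fun i : Fin (k-1) => (i : ℕ) < ε) j
    rw [card_lt_filter_fin (m := k - 1) hε] at hkey
    rw [← hkey]
    congr 1
    ext f
    simp only [hF, hG, Finset.mem_filter, Finset.mem_univ, true_and, and_assoc]
    constructor
    · rintro ⟨hc, hng⟩
      refine ⟨hc, ?_⟩
      intro i hiT
      have hge : ε ≤ (i : ℕ) := not_lt.1 hiT
      have hall : ∀ x ∈ (List.ofFn f).drop ε, x = Step.N := by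
        intro x hx
        cases hxval : x with
        | N => rfl
        | E => exact absurd ⟨x, hx, hxval⟩ hng
      exact (drop_ofFn_allN_iff f).1 hall i hge
    · rintro ⟨hc, hsupp⟩
      refine ⟨hc, ?_⟩
      rintro ⟨x, hx, rfl⟩
      have hall : ∀ i : Fin (k-1), ε ≤ (i : ℕ) → f i = Step.N := by
        intro i hi
        exact hsupp i (not_lt.2 hi)
      have := (drop_ofFn_allN_iff f).2 hall _ hx
      exact Step.noConfusion this
  have hcard_F : F.card = (k-1).choose j := by
    have := count_indicator_card (Finset.univ : Finset (Fin (k-1))) j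
    rw [Finset.card_univ, Fintype.card_fin] at this
    rw [← this]
    congr 1
    ext f
    simp [hF]
  have hsplit := Finset.card_filter_add_card_filter_not (s := F) (p := G)
  have hchle : ε.choose j ≤ (k-1).choose j := Nat.choose_le_choose j hε
  have hgoodcard : (F.filter G).card = (k-1).choose j - ε.choose j := by omega
  rw [hgoodcard]
  rw [nsmul_eq_mul]
  rw [Nat.cast_sub hchle]
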